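/- Let S be a finite set of drivers with weights wⱼ ∈ [0,1] and independent Bernoulli acceptance probabilities pⱼ ∈ [0,1]. Then the First-Accept valuation satisfies F(S) ≤ 2 · F^MNL(S), where F^MNL(S) = Σ_{j∈S} wⱼ pⱼ / (1 + Σ_{k∈S} pₖ). -/

import Mathlib

open Finset

/-- The product-measure weight of a realization `x` of independent
Bernoulli(pⱼ) acceptance indicators. -/
noncomputable def bernWeight {ι : Type*} [Fintype ι] (p : ι → ℝ) (x : ι → Bool) : ℝ :=
  ∏ k, if x k then p k else 1 - p k

/-- The First-Accept valuation: the expected weight of a uniformly random accepting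
driver of `S` (0 if no driver accepts). -/
noncomputable def FA {ι : Type*} [Fintype ι] [DecidableEq ι]
    (w p : ι → ℝ) (S : Finset ι) : ℝ :=
  ∑ x : ι → Bool, bernWeight p x *
    ((∑ j ∈ S.filter (fun j => x j = true), w j) /
      ((S.filter (fun j => x j = true)).card : ℝ))

/-- The MNL surrogate valuation `F^MNL(S) = Σ_{j∈S} wⱼpⱼ / (1 + Σ_{k∈S} pₖ)`. -/
noncomputable def FMNL {ι : Type*} (w p : ι → ℝ) (S : Finset ι) : ℝ :=
  (∑ j ∈ S, w j * p j) / (1 + ∑ k ∈ S, p k)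

lemma sum_pi_bool {ι : Type*} [Fintype ι] [DecidableEq ι] (f : ι → Bool → ℝ) :
    ∑ x : ι → Bool, ∏ k, f k (x k) = ∏ k, (f k true + f k false) := by
  rw [← Fintype.piFinset_univ, ← Finset.prod_univ_sum]
  simp [add_comm]

lemma gen_fun {ι : Type*} [Fintype ι] [DecidableEq ι] (p : ι → ℝ) (S : Finset ι)
    {j : ι} (hj : j ∈ S) (t : ℝ) :
    ∑ x : ι → Bool, bernWeight p x *
        (if x j then t ^ ((S.erase j).filter (fun k => x k = true)).card else 0)
      = p j * ∏ k ∈ S.erase j, (1 - (1 - t) * p k) := by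
  clear hj
  have key : ∀ x : ι → Bool,
      bernWeight p x * (if x j then t ^ ((S.erase j).filter (fun k => x k = true)).card else 0)
      = ∏ k, ((if x k then p k else 1 - p k) *
          (if k = j then (if x k then (1:ℝ) else 0)
           else if k ∈ S.erase j then (if x k then t else 1) else 1)) := by
    intro x
    rw [Finset.prod_mul_distrib]
    unfold bernWeight
    congr 1
    have hsub : ∏ k, (if k = j then (if x k then (1:ℝ) else 0)
           else if k ∈ S.erase j then (if x k then t else 1) else 1)
        = ∏ k ∈ insert j (S.erase j), (if k = j then (if x k then (1:ℝ) else 0)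
           else if k ∈ S.erase j then (if x k then t else 1) else 1) := by
      refine (Finset.prod_subset (Finset.subset_univ _) ?_).symm
      intro k _ hk
      simp only [Finset.mem_insert, not_or] at hk
      simp [hk.1, hk.2]
    rw [hsub, Finset.prod_insert (Finset.notMem_erase j S), if_pos rfl]
    have h2 : ∏ k ∈ S.erase j, (if k = j then (if x k then (1:ℝ) else 0)
           else if k ∈ S.erase j then (if x k then t else 1) else 1)
        = ∏ k ∈ S.erase j, (if x k then t else 1) := by
      refine Finset.prod_congr rfl fun k hk => ?_
      have : k ≠ j := Finset.ne_of_mem_erase hk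
      simp [this, hk]
    rw [h2, ← Finset.prod_filter (fun k => x k = true) (fun _ => t), Finset.prod_const]
    by_cases hxj : x j <;> simp [hxj, mul_comm]
  simp_rw [key]
  rw [sum_pi_bool (f := fun k b => (if b then p k else 1 - p k) *
          (if k = j then (if b then (1:ℝ) else 0)
           else if k ∈ S.erase j then (if b then t else 1) else 1))]
  have hsub : ∏ k, ((if (true:Bool) then p k else 1 - p k) *
          (if k = j then (if (true:Bool) then (1:ℝ) else 0)
           else if k ∈ S.erase j then (if (true:Bool) then t else 1) else 1)
        + (if (false:Bool) then p k else 1 - p k) *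
          (if k = j then (if (false:Bool) then (1:ℝ) else 0)
           else if k ∈ S.erase j then (if (false:Bool) then t else 1) else 1))
      = ∏ k ∈ insert j (S.erase j), ((if (true:Bool) then p k else 1 - p k) *
          (if k = j then (if (true:Bool) then (1:ℝ) else 0)
           else if k ∈ S.erase j then (if (true:Bool) then t else 1) else 1)
        + (if (false:Bool) then p k else 1 - p k) *
          (if k = j then (if (false:Bool) then (1:ℝ) else 0)
           else if k ∈ S.erase j then (if (false:Bool) then t else 1) else 1)) := by
    refine (Finset.prod_subset (Finset.subset_univ _) ?_).symm
    intro k _ hk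
    simp only [Finset.mem_insert, not_or] at hk
    simp [hk.1, hk.2]
  rw [hsub, Finset.prod_insert (Finset.notMem_erase j S)]
  congr 1
  · norm_num
  · refine Finset.prod_congr rfl fun k hk => ?_
    have hkj : k ≠ j := Finset.ne_of_mem_erase hk
    simp only [if_neg hkj, if_pos hk]
    norm_num
    ring

lemma T_eq {ι : Type*} [Fintype ι] [DecidableEq ι] (p : ι → ℝ) (S : Finset ι)
    {j : ι} (hj : j ∈ S) :
    ∑ x : ι → Bool, bernWeight p x *
        (if x j then 1 / ((S.filter (fun k => x k = true)).card : ℝ) else 0)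
      = ∫ t in (0:ℝ)..1, p j * ∏ k ∈ S.erase j, (1 - (1 - t) * p k) := by
  have hcard : ∀ x : ι → Bool, x j = true →
      ((S.filter (fun k => x k = true)).card : ℝ)
        = (((S.erase j).filter (fun k => x k = true)).card : ℝ) + 1 := by
    intro x hx
    have hjm : j ∈ S.filter (fun k => x k = true) := Finset.mem_filter.2 ⟨hj, hx⟩
    have h1 : 1 ≤ (S.filter (fun k => x k = true)).card := Finset.card_pos.2 ⟨j, hjm⟩
    rw [Finset.filter_erase, Finset.card_erase_of_mem hjm]
    push_cast [h1]
    ring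
  have key : ∀ x : ι → Bool,
      bernWeight p x * (if x j then 1 / ((S.filter (fun k => x k = true)).card : ℝ) else 0)
      = ∫ t in (0:ℝ)..1, bernWeight p x *
          (if x j then t ^ ((S.erase j).filter (fun k => x k = true)).card else 0) := by
    intro x
    by_cases hx : x j = true
    · simp only [hx, if_true]
      rw [intervalIntegral.integral_const_mul, integral_pow]
      rw [hcard x hx]
      norm_num
    · simp [hx]
  simp_rw [key]
  rw [← intervalIntegral.integral_finset_sum]
  · apply intervalIntegral.integral_congr
    intro t _
    exact gen_fun p S hj t
  · intro x _
    apply Continuous.intervalIntegrable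
    by_cases hx : x j = true <;> simp [hx] <;> continuity

lemma calc_fact (q : ℝ) (hq : 0 ≤ q) : (2 + q) * (1 - Real.exp (-q)) ≤ 2 * q := by
  have hder : ∀ y : ℝ, HasDerivAt (fun z => 2 * z - (2 + z) * (1 - Real.exp (-z)))
      (1 - (1 + y) * Real.exp (-y)) y := by
    intro y
    have h1 : HasDerivAt (fun z : ℝ => Real.exp (-z)) (-Real.exp (-y)) y := by
      exact ((Real.hasDerivAt_exp (-y)).comp y (hasDerivAt_neg y)).congr_deriv (by ring)
    have h2 : HasDerivAt (fun z : ℝ => (2 + z) * (1 - Real.exp (-z)))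
        (1 * (1 - Real.exp (-y)) + (2 + y) * Real.exp (-y)) y := by
      have ha : HasDerivAt (fun z : ℝ => 2 + z) 1 y := by
        simpa using (hasDerivAt_id y).const_add 2
      have hb : HasDerivAt (fun z : ℝ => 1 - Real.exp (-z)) (Real.exp (-y)) y := by
        simpa using h1.const_sub 1
      exact (ha.mul hb).congr_deriv (by ring)
    have h3 : HasDerivAt (fun z : ℝ => 2 * z) 2 y := by
      simpa using (hasDerivAt_id y).const_mul 2
    have := h3.sub h2
    exact this.congr_deriv (by ring)
  have mono : MonotoneOn (fun z => 2 * z - (2 + z) * (1 - Real.exp (-z))) (Set.Ici (0:ℝ)) := by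
    apply monotoneOn_of_deriv_nonneg (convex_Ici 0)
    · exact Continuous.continuousOn (by continuity)
    · intro y _
      exact (hder y).differentiableAt.differentiableWithinAt
    · intro y _
      rw [(hder y).deriv]
      have h4 : (1 + y) * Real.exp (-y) ≤ Real.exp y * Real.exp (-y) :=
        mul_le_mul_of_nonneg_right (by simpa [add_comm] using Real.add_one_le_exp y)
          (Real.exp_nonneg _)
      rw [← Real.exp_add] at h4
      simp at h4
      linarith
  have h0 := mono (Set.self_mem_Ici) (Set.mem_Ici.2 hq) hq
  simp at h0
  linarith

lemma exp_int (Q : ℝ) (hQ : 0 < Q) :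
    (∫ t in (0:ℝ)..1, Real.exp (-(1 - t) * Q)) = (1 - Real.exp (-Q)) / Q := by
  have hF : ∀ t : ℝ, HasDerivAt (fun s => Real.exp (Q * s - Q) / Q) (Real.exp (-(1 - t) * Q)) t := by
    intro t
    have h1 : HasDerivAt (fun s : ℝ => Q * s - Q) Q t := by
      simpa using ((hasDerivAt_id t).const_mul Q).sub_const Q
    have h2 := (Real.hasDerivAt_exp (Q * t - Q)).comp t h1
    have h3 := h2.div_const Q
    exact h3.congr_deriv (by rw [mul_div_assoc, div_self hQ.ne', mul_one]; ring_nf)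
  rw [intervalIntegral.integral_eq_sub_of_hasDerivAt (fun t _ => hF t)]
  · norm_num; ring
  · apply Continuous.intervalIntegrable
    continuity

lemma prod_int_bound {ι : Type*} (p : ι → ℝ) (hp : ∀ j, 0 ≤ p j ∧ p j ≤ 1) (A : Finset ι) :
    (∫ t in (0:ℝ)..1, ∏ k ∈ A, (1 - (1 - t) * p k)) ≤ 2 / (2 + ∑ k ∈ A, p k) := by
  set Q := ∑ k ∈ A, p k with hQdef
  have hQ : 0 ≤ Q := Finset.sum_nonneg fun k _ => (hp k).1
  have step1 : (∫ t in (0:ℝ)..1, ∏ k ∈ A, (1 - (1 - t) * p k))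
      ≤ ∫ t in (0:ℝ)..1, Real.exp (-(1 - t) * Q) := by
    apply intervalIntegral.integral_mono_on zero_le_one
    · apply Continuous.intervalIntegrable; continuity
    · apply Continuous.intervalIntegrable; continuity
    · intro t ht
      obtain ⟨ht0, ht1⟩ := ht
      have : ∀ k ∈ A, (1 - (1 - t) * p k) ≤ Real.exp (-(1 - t) * p k) := by
        intro k _
        have := Real.add_one_le_exp (-(1 - t) * p k)
        linarith
      calc ∏ k ∈ A, (1 - (1 - t) * p k) ≤ ∏ k ∈ A, Real.exp (-(1 - t) * p k) := by
            apply Finset.prod_le_prod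
            · intro k _
              have h1 : (1 - t) * p k ≤ 1 * 1 :=
                mul_le_mul (by linarith) (hp k).2 (hp k).1 zero_le_one
              linarith
            · exact this
        _ = Real.exp (-(1 - t) * Q) := by
            rw [← Real.exp_sum]
            congr 1
            rw [hQdef, Finset.mul_sum]
  have step2 : (∫ t in (0:ℝ)..1, Real.exp (-(1 - t) * Q)) ≤ 2 / (2 + Q) := by
    rcases eq_or_lt_of_le hQ with h | h
    · simp [← h]
    · rw [exp_int Q h]
      rw [div_le_div_iff₀ h (by linarith : (0:ℝ) < 2 + Q)]
      linarith [calc_fact Q hQ]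
  linarith

/-- Upper bound: the First-Accept valuation is at most twice the MNL surrogate. -/
theorem stmt_11 {ι : Type*} [Fintype ι] [DecidableEq ι]
    (w p : ι → ℝ)
    (hw : ∀ j, 0 ≤ w j ∧ w j ≤ 1)
    (hp : ∀ j, 0 ≤ p j ∧ p j ≤ 1)
    (S : Finset ι) :
    FA w p S ≤ 2 * FMNL w p S := by
  set P := ∑ k ∈ S, p k with hPdef
  have hP : 0 ≤ P := Finset.sum_nonneg fun k _ => (hp k).1
  have h1P : (0:ℝ) < 1 + P := by linarith
  have hFA : FA w p S = ∑ j ∈ S, w j * (∑ x : ι → Bool, bernWeight p x *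
      (if x j then 1 / ((S.filter (fun k => x k = true)).card : ℝ) else 0)) := by
    unfold FA
    have hx : ∀ x : ι → Bool,
        bernWeight p x * ((∑ j ∈ S.filter (fun j => x j = true), w j) /
          ((S.filter (fun j => x j = true)).card : ℝ))
        = ∑ j ∈ S, w j * (bernWeight p x *
            (if x j then 1 / ((S.filter (fun k => x k = true)).card : ℝ) else 0)) := by
      intro x
      rw [Finset.sum_div, Finset.mul_sum, Finset.sum_filter]
      apply Finset.sum_congr rfl
      intro j _
      by_cases hxj : x j = true <;> simp [hxj] <;> ring
    simp_rw [hx]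
    rw [Finset.sum_comm]
    apply Finset.sum_congr rfl
    intro j _
    rw [Finset.mul_sum]
  rw [hFA]
  have hbound : ∀ j ∈ S, (∑ x : ι → Bool, bernWeight p x *
      (if x j then 1 / ((S.filter (fun k => x k = true)).card : ℝ) else 0))
      ≤ 2 * p j / (1 + P) := by
    intro j hj
    rw [T_eq p S hj, intervalIntegral.integral_const_mul]
    set Q := ∑ k ∈ S.erase j, p k with hQdef
    have hQP : p j + Q = P := by
      rw [hQdef, hPdef]
      exact Finset.add_sum_erase S p hj
    have hQ : 0 ≤ Q := Finset.sum_nonneg fun k _ => (hp k).1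
    have hib := prod_int_bound p hp (S.erase j)
    rw [← hQdef] at hib
    have h2Q : (0:ℝ) < 2 + Q := by linarith
    have hmono : 2 / (2 + Q) ≤ 2 / (1 + P) := by
      apply div_le_div_of_nonneg_left (by norm_num) h1P
      have := (hp j).2
      linarith
    calc p j * ∫ t in (0:ℝ)..1, ∏ k ∈ S.erase j, (1 - (1 - t) * p k)
        ≤ p j * (2 / (1 + P)) := by
          apply mul_le_mul_of_nonneg_left (le_trans hib hmono) (hp j).1
      _ = 2 * p j / (1 + P) := by ring
  calc ∑ j ∈ S, w j * (∑ x : ι → Bool, bernWeight p x *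
        (if x j then 1 / ((S.filter (fun k => x k = true)).card : ℝ) else 0))
      ≤ ∑ j ∈ S, w j * (2 * p j / (1 + P)) := by
        apply Finset.sum_le_sum
        intro j hj
        exact mul_le_mul_of_nonneg_left (hbound j hj) (hw j).1
    _ = 2 * FMNL w p S := by
        unfold FMNL
        rw [← hPdef]
        rw [show (∑ j ∈ S, w j * (2 * p j / (1 + P)))
            = (∑ j ∈ S, 2 * (w j * p j)) / (1 + P) by
          rw [Finset.sum_div]; apply Finset.sum_congr rfl; intros; ring]
        rw [← Finset.mul_sum, mul_div_assoc]
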